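/- For integers m > n > 4, s(m, π/2) − π(m) differs from s(n, π/2) − π(n) by at most (π²/4)·Σ_{n < p ≤ m, p prime} 1/p², in absolute value. -/

import Mathlib

open Nat

lemma prod_Icc_id (n : ℕ) : ∏ x ∈ Finset.Icc 1 n, x = n ! := by
  induction n with
  | zero => simp
  | succ n ih =>
    rw [Finset.prod_Icc_succ_top (by omega), ih, Nat.factorial_succ, mul_comm]

lemma subset_dvd (k : ℕ) (s : Finset ℕ) (hs : s ⊆ Finset.Icc 1 (k-1))
    (hd : 2*k ∣ ∏ x ∈ s, x) : 2*k ∣ (k-1)! := by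
  exact hd.trans ((Finset.prod_dvd_prod_of_subset _ _ _ hs).trans (prod_Icc_id (k-1)).dvd)

lemma comp_dvd (k : ℕ) (hk : 4 < k) (hp : ¬ k.Prime) : 2 * k ∣ (k-1)! := by
  have hk1 : k ≠ 1 := by omega
  obtain ⟨p, hpp, hpd, hmin⟩ : ∃ p, p.Prime ∧ p ∣ k ∧ ∀ q, q.Prime → q ∣ k → p ≤ q :=
    ⟨k.minFac, Nat.minFac_prime hk1, Nat.minFac_dvd k,
      fun q hq hqd => Nat.minFac_le_of_dvd hq.two_le hqd⟩
  obtain ⟨m, hm⟩ := hpd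
  have hm2 : 2 ≤ m := by
    rcases Nat.lt_or_ge m 2 with h | h
    · interval_cases m
      · omega
      · simp at hm; exact absurd (hm ▸ hpp) hp
    · exact h
  have hp2 : 2 ≤ p := hpp.two_le
  by_cases hpe : p = 2
  · -- k = 2 * m, m ≥ 3
    subst hpe
    have hm3 : 3 ≤ m := by omega
    by_cases hm4 : m = 4
    · subst hm4; subst hm; decide
    · apply subset_dvd k {4, m}
      · intro x hx
        simp only [Finset.mem_insert, Finset.mem_singleton] at hx
        rcases hx with rfl | rfl <;> simp only [Finset.mem_Icc] <;> omega
      · rw [Finset.prod_pair (by omega)]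
        exact ⟨1, by omega⟩
  · -- p odd, so k odd, m odd, m ≥ p ≥ 3
    have hodd : ¬ 2 ∣ k := fun h => hpe (le_antisymm (hmin 2 Nat.prime_two h) (by omega))
    have hmodd : ¬ 2 ∣ m := fun h => hodd (h.trans ⟨p, by rw [hm]; ring⟩)
    have hp3 : 3 ≤ p := by omega
    have hm3 : 3 ≤ m := by omega
    by_cases hpm : p = m
    · -- k = p^2
      have h2p : 2 * p + 2 ≤ k := by subst hm; subst hpm; nlinarith
      apply subset_dvd k {2, p, 2*p}
      · intro x hx
        simp only [Finset.mem_insert, Finset.mem_singleton] at hx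
        rcases hx with rfl | rfl | rfl <;> simp only [Finset.mem_Icc] <;> omega
      · rw [Finset.prod_insert (by simp; omega), Finset.prod_pair (by omega)]
        exact ⟨2, by subst hm; subst hpm; ring⟩
    · have h1 : 2 * p ≤ k := by subst hm; nlinarith
      have h2 : 2 * m ≤ k := by subst hm; nlinarith
      apply subset_dvd k {2, p, m}
      · intro x hx
        simp only [Finset.mem_insert, Finset.mem_singleton] at hx
        rcases hx with rfl | rfl | rfl <;> simp only [Finset.mem_Icc] <;> omega
      · rw [Finset.prod_insert (by simp; omega), Finset.prod_pair hpm]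
        exact ⟨1, by omega⟩

lemma comp_term (k : ℕ) (hk : 4 < k) (hp : ¬ k.Prime)
    (hdvd : 2 * k ∣ (k-1)!) :
    Real.sin (Real.pi / 2 * ((k - 1)! : ℝ) / (k : ℝ)) ^ 2 = 0 := by
  obtain ⟨t, ht⟩ := hdvd
  have hk0 : (k : ℝ) ≠ 0 := by positivity
  have : Real.pi / 2 * ((k - 1)! : ℝ) / (k : ℝ) = (t : ℝ) * Real.pi := by
    rw [ht]; push_cast; field_simp
  rw [this, Real.sin_nat_mul_pi]; ring

lemma prime_term (p : ℕ) (hp : p.Prime) (h2 : 2 < p) :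
    |Real.sin (Real.pi / 2 * ((p - 1)! : ℝ) / (p : ℝ)) ^ 2 - 1|
      ≤ Real.pi ^ 2 / 4 * (1 / (p : ℝ) ^ 2) := by
  haveI : Fact p.Prime := ⟨hp⟩
  have hw := ZMod.wilsons_lemma p
  have hdvd : p ∣ (p - 1)! + 1 := by
    rw [← ZMod.natCast_eq_zero_iff]
    push_cast
    rw [hw]; ring
  obtain ⟨q, hq⟩ := hdvd
  obtain ⟨a, ha⟩ : 2 ∣ (p - 1)! := Nat.dvd_factorial (by omega) (by omega)
  have hpo : p % 2 = 1 := Nat.odd_iff.mp (hp.odd_of_ne_two (by omega))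
  obtain ⟨r, hr⟩ : ∃ r, q = 2 * r + 1 := by
    rcases Nat.even_or_odd q with ⟨c, hc⟩ | ⟨r, hr⟩
    · exfalso
      have h2d : 2 ∣ p * q := by exact ⟨p * c, by rw [hc]; ring⟩
      omega
    · exact ⟨r, hr⟩
  have hfact : (p - 1)! + 1 = p * (2 * r + 1) := by rw [hq, hr]
  have hp0 : (p : ℝ) ≠ 0 := by positivity
  have hc : ((p - 1)! : ℝ) = (p : ℝ) * (2 * r + 1) - 1 := by
    have := congrArg (Nat.cast : ℕ → ℝ) hfact
    push_cast at this
    linarith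
  have hang : Real.pi / 2 * ((p - 1)! : ℝ) / (p : ℝ)
      = (r : ℝ) * Real.pi + (Real.pi / 2 - Real.pi / (2 * p)) := by
    rw [hc]; field_simp; ring
  rw [hang, Real.sin_add, Real.sin_nat_mul_pi, zero_mul, zero_add, mul_pow]
  have hcr : Real.cos ((r : ℝ) * Real.pi) ^ 2 = 1 := by
    have h := Real.sin_sq_add_cos_sq ((r : ℝ) * Real.pi)
    rw [Real.sin_nat_mul_pi] at h
    linarith [h]
  rw [hcr, Real.sin_pi_div_two_sub, Real.cos_sq', one_mul]
  have hy0 : (0:ℝ) < Real.pi / (2 * p) := by positivity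
  have hyp : Real.pi / (2 * p) ≤ Real.pi := by
    rw [div_le_iff₀ (by positivity)]
    have h2p : (1:ℝ) ≤ 2 * p := by
      have : (2:ℝ) ≤ (p:ℝ) := by exact_mod_cast h2.le
      linarith
    exact le_mul_of_one_le_right Real.pi_pos.le h2p
  have hs0 : 0 ≤ Real.sin (Real.pi / (2 * p)) :=
    Real.sin_nonneg_of_nonneg_of_le_pi hy0.le hyp
  have hsle : Real.sin (Real.pi / (2 * p)) ≤ Real.pi / (2 * p) := Real.sin_le hy0.le
  have hsq : Real.sin (Real.pi / (2 * p)) ^ 2 ≤ (Real.pi / (2 * p)) ^ 2 := by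
    exact pow_le_pow_left₀ hs0 hsle 2
  have : (Real.pi / (2 * p)) ^ 2 = Real.pi ^ 2 / 4 * (1 / (p : ℝ) ^ 2) := by
    field_simp; ring
  rw [abs_of_nonpos (by nlinarith [sq_nonneg (Real.sin (Real.pi / (2*p)))])]
  nlinarith

noncomputable def s (n : ℕ) (x : ℝ) : ℝ :=
  ∑ k ∈ Finset.Icc 1 n, Real.sin (x * (k - 1).factorial / k) ^ 2

theorem stmt_6 (n m : ℕ) (hn : 4 < n) (hnm : n < m) :
    |(s m (Real.pi / 2) - Nat.primeCounting m)
        - (s n (Real.pi / 2) - Nat.primeCounting n)|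
      ≤ Real.pi ^ 2 / 4 *
        ∑ p ∈ (Finset.Ioc n m).filter Nat.Prime, (1 : ℝ) / (p : ℝ) ^ 2 := by
  have hdisj : Disjoint (Finset.Icc 1 n) (Finset.Ioc n m) := by
    rw [Finset.disjoint_left]
    intro a ha hb
    simp only [Finset.mem_Icc] at ha
    simp only [Finset.mem_Ioc] at hb
    omega
  have hunion : Finset.Icc 1 n ∪ Finset.Ioc n m = Finset.Icc 1 m := by
    ext x
    simp only [Finset.mem_union, Finset.mem_Icc, Finset.mem_Ioc]
    omega
  have hsum : s m (Real.pi / 2) - s n (Real.pi / 2)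
      = ∑ k ∈ Finset.Ioc n m, Real.sin (Real.pi / 2 * ((k - 1)! : ℝ) / (k:ℝ)) ^ 2 := by
    rw [s, s, ← hunion, Finset.sum_union hdisj]
    ring
  have hpc : ∀ j : ℕ, Nat.primeCounting j
      = ((Finset.range (j+1)).filter Nat.Prime).card := by
    intro j
    rw [Nat.primeCounting, Nat.primeCounting', Nat.count_eq_card_filter_range]
  have hrange : Finset.range (m+1) = Finset.range (n+1) ∪ Finset.Ioc n m := by
    ext x
    simp only [Finset.mem_range, Finset.mem_union, Finset.mem_Ioc]
    omega
  have hdisj2 : Disjoint (Finset.range (n+1)) (Finset.Ioc n m) := by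
    rw [Finset.disjoint_left]
    intro a ha hb
    simp only [Finset.mem_range] at ha
    simp only [Finset.mem_Ioc] at hb
    omega
  have hcount : Nat.primeCounting m
      = Nat.primeCounting n + ((Finset.Ioc n m).filter Nat.Prime).card := by
    rw [hpc, hpc, hrange, Finset.filter_union,
      Finset.card_union_of_disjoint (Finset.disjoint_filter_filter hdisj2)]
  have key : (s m (Real.pi / 2) - Nat.primeCounting m)
        - (s n (Real.pi / 2) - Nat.primeCounting n)
      = ∑ p ∈ (Finset.Ioc n m).filter Nat.Prime,
          (Real.sin (Real.pi / 2 * ((p - 1)! : ℝ) / (p:ℝ)) ^ 2 - 1) := by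
    have h1 : (s m (Real.pi / 2) - Nat.primeCounting m)
        - (s n (Real.pi / 2) - Nat.primeCounting n)
        = (s m (Real.pi / 2) - s n (Real.pi / 2))
          - (((Finset.Ioc n m).filter Nat.Prime).card : ℝ) := by
      rw [hcount]; push_cast; ring
    rw [h1, hsum, ← Finset.sum_filter_add_sum_filter_not (Finset.Ioc n m) Nat.Prime]
    have h2 : ∑ k ∈ (Finset.Ioc n m).filter (fun k => ¬ Nat.Prime k),
        Real.sin (Real.pi / 2 * ((k - 1)! : ℝ) / (k:ℝ)) ^ 2 = 0 := by
      apply Finset.sum_eq_zero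
      intro k hk
      simp only [Finset.mem_filter, Finset.mem_Ioc] at hk
      exact comp_term k (by omega) hk.2 (comp_dvd k (by omega) hk.2)
    rw [h2, add_zero, Finset.sum_sub_distrib]
    simp
  rw [key, Finset.mul_sum]
  refine (Finset.abs_sum_le_sum_abs _ _).trans (Finset.sum_le_sum ?_)
  intro p hp
  simp only [Finset.mem_filter, Finset.mem_Ioc] at hp
  exact prime_term p hp.2 (by omega)
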